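/- For every nonnegative integer n, every real ρ > 0, and every nonzero complex z, one has H_n(ρ(z + z⁻¹)/2) = (n!/(-ρz)ⁿ) ∑_{j=0}^{n} ((-ρ²z²)^j / j!) L_{n-j}^{(2j-n)}(ρ²), where L_{n-j}^{(2j-n)} is the generalized Laguerre polynomial (with possibly negative integer parameter, defined via L_n^{(α)}(x) = ∑_{k=0}^n (-1)^k C(n+α, n-k) x^k/k! using generalized binomial coefficients). -/

import Mathlib

open Complex
open Finset

/-- Physicists' Hermite polynomial. -/
noncomputable def Hpoly (n : ℕ) (x : ℂ) : ℂ :=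
  (Nat.factorial n) * ∑ k ∈ Finset.range (n / 2 + 1),
    (-1 : ℂ) ^ k * (2 * x) ^ (n - 2 * k) / ((Nat.factorial k) * (Nat.factorial (n - 2 * k)))

/-- Generalized Laguerre polynomial with (possibly negative) integer parameter `α`:
`L_n^{(α)}(x) = ∑_{k=0}^n (-x)^k/k! · (∏_{i=k+1}^n (α+i)) / (n-k)!`. -/
noncomputable def lagC (n : ℕ) (α : ℤ) (x : ℂ) : ℂ :=
  ∑ k ∈ Finset.range (n + 1),
    (-x) ^ k / (Nat.factorial k) *
      ((∏ i ∈ Finset.Icc (k + 1) n, ((α : ℂ) + (i : ℕ))) / (Nat.factorial (n - k)))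

lemma aux_prod (a M : ℕ) : a.factorial * ∏ d ∈ Finset.range M, (a + 1 + d) = (a + M).factorial := by
  induction M with
  | zero => simp
  | succ M ih =>
    rw [Finset.prod_range_succ, ← mul_assoc, ih, show a + 1 + M = a + M + 1 by omega,
      show a + (M+1) = (a + M) + 1 by omega, Nat.factorial_succ]
    ring

lemma prod_eval (n j k : ℕ) (hj : j ≤ n) (hk : k ≤ n - j) (h : n ≤ 2*j + k) :
    ∏ i ∈ Finset.Icc (k+1) (n-j), (((2*(j:ℤ) - (n:ℤ) : ℤ) : ℂ) + (i : ℕ))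
      = (j.factorial : ℂ) / ((2*j+k-n).factorial : ℂ) := by
  have hM : n - j + 1 - (k+1) = n - j - k := by omega
  rw [← Finset.Ico_add_one_right_eq_Icc, Finset.prod_Ico_eq_prod_range, hM]
  have hcongr : ∀ d ∈ Finset.range (n - j - k),
      (((2*(j:ℤ) - (n:ℤ) : ℤ) : ℂ) + ((k + 1 + d : ℕ) : ℕ)) = (((2*j+k-n) + 1 + d : ℕ) : ℂ) := by
    intro d _
    push_cast [Nat.cast_sub (by omega : n ≤ 2*j+k)]
    ring
  rw [Finset.prod_congr rfl hcongr, ← Nat.cast_prod]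
  have key := aux_prod (2*j+k-n) (n-j-k)
  have hjj : 2*j+k-n + (n-j-k) = j := by omega
  rw [hjj] at key
  have h0 : ((2*j+k-n).factorial : ℂ) ≠ 0 := Nat.cast_ne_zero.2 (Nat.factorial_ne_zero _)
  field_simp
  rw [mul_comm]; exact_mod_cast key

lemma prod_zero (n j k : ℕ) (hk : k ≤ n - j) (h : 2*j + k < n) :
    ∏ i ∈ Finset.Icc (k+1) (n-j), (((2*(j:ℤ) - (n:ℤ) : ℤ) : ℂ) + (i : ℕ)) = 0 := by
  apply Finset.prod_eq_zero (i := n - 2*j)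
  · simp only [Finset.mem_Icc]; omega
  · push_cast [Nat.cast_sub (by omega : 2*j ≤ n)]
    ring

lemma term_eq (ρ : ℝ) (_hρ : (ρ:ℂ) ≠ 0) (z : ℂ) (hz : z ≠ 0) (K m c : ℕ) :
    (-(ρ:ℂ) * z) ^ (m + c + 2*K) *
      ((-1:ℂ)^K * ((ρ:ℂ)^(m+c) * (z^m * (z⁻¹)^c * ((m+c).choose m : ℂ)))
        / ((K.factorial : ℂ) * ((m+c).factorial : ℂ)))
    = (-(ρ:ℂ)^2 * z^2)^(m+K) / ((m+K).factorial : ℂ) *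
        ((-(ρ:ℂ)^2)^c / (c.factorial : ℂ) *
          ((((m+K).factorial : ℂ) / (m.factorial : ℂ)) / (K.factorial : ℂ))) := by
  have hchN : (m+c).choose m * m.factorial * c.factorial = (m+c).factorial := by
    have := Nat.choose_mul_factorial_mul_factorial (Nat.le_add_right m c)
    rwa [Nat.add_sub_cancel_left] at this
  have hch : ((m+c).choose m : ℂ) * (m.factorial : ℂ) * (c.factorial : ℂ) = ((m+c).factorial : ℂ) := by
    exact_mod_cast congrArg (Nat.cast : ℕ → ℂ) hchN
  have f1 : (K.factorial : ℂ) ≠ 0 := Nat.cast_ne_zero.2 (Nat.factorial_ne_zero _)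
  have f2 : (m.factorial : ℂ) ≠ 0 := Nat.cast_ne_zero.2 (Nat.factorial_ne_zero _)
  have f3 : (c.factorial : ℂ) ≠ 0 := Nat.cast_ne_zero.2 (Nat.factorial_ne_zero _)
  have f4 : ((m+c).factorial : ℂ) ≠ 0 := Nat.cast_ne_zero.2 (Nat.factorial_ne_zero _)
  have f5 : ((m+K).factorial : ℂ) ≠ 0 := Nat.cast_ne_zero.2 (Nat.factorial_ne_zero _)
  have e1 : (-(ρ:ℂ) * z)^(m+c+2*K) = (-1)^m * (-1)^c * ((ρ:ℂ)*z)^(m+c+2*K) := by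
    rw [show (-(ρ:ℂ)*z) = (-1) * ((ρ:ℂ)*z) by ring, mul_pow, pow_add, pow_add, pow_mul,
      neg_one_sq, one_pow, mul_one]
  have e2 : (-(ρ:ℂ)^2 * z^2)^(m+K) = (-1)^m * (-1)^K * (((ρ:ℂ)*z)^2)^(m+K) := by
    rw [show (-(ρ:ℂ)^2*z^2) = (-1) * ((ρ:ℂ)*z)^2 by ring, mul_pow, pow_add]
  have e3 : (-(ρ:ℂ)^2)^c = (-1)^c * ((ρ:ℂ)^2)^c := by
    rw [show (-(ρ:ℂ)^2) = (-1) * (ρ:ℂ)^2 by ring, mul_pow]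
  rw [e1, e2, e3, ← hch, inv_pow]
  have hzc : (z:ℂ)^c ≠ 0 := pow_ne_zero _ hz
  have hcn : ((m+c).choose m : ℂ) ≠ 0 := Nat.cast_ne_zero.2 (Nat.choose_pos (Nat.le_add_right m c)).ne'
  field_simp
  ring

theorem hermite_laguerre_expansion (n : ℕ) (ρ : ℝ) (hρ : 0 < ρ) (z : ℂ) (hz : z ≠ 0) :
    Hpoly n ((ρ : ℂ) * (z + z⁻¹) / 2) =
      (Nat.factorial n : ℂ) / (-(ρ : ℂ) * z) ^ n *
        ∑ j ∈ Finset.range (n + 1),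
          (-(ρ : ℂ) ^ 2 * z ^ 2) ^ j / (Nat.factorial j) *
            lagC (n - j) (2 * (j : ℤ) - n) ((ρ : ℂ) ^ 2) := by
  have hρ0 : (ρ:ℂ) ≠ 0 := by
    simpa using Complex.ofReal_ne_zero.2 hρ.ne'
  have hpz : (-(ρ:ℂ) * z) ^ n ≠ 0 := pow_ne_zero _ (by simp [hρ0, hz])
  unfold Hpoly lagC
  rw [show 2 * ((ρ:ℂ) * (z + z⁻¹) / 2) = (ρ:ℂ) * (z + z⁻¹) by ring]
  -- expand LHS binomially
  have hexp : ∀ K ∈ Finset.range (n/2+1),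
      (-1:ℂ)^K * ((ρ:ℂ)*(z+z⁻¹))^(n-2*K) / ((K.factorial : ℂ) * ((n-2*K).factorial : ℂ))
      = ∑ m ∈ Finset.range (n-2*K+1),
          (-1:ℂ)^K * ((ρ:ℂ)^(n-2*K) * (z^m * (z⁻¹)^((n-2*K)-m) * (((n-2*K).choose m : ℕ) : ℂ)))
            / ((K.factorial : ℂ) * ((n-2*K).factorial : ℂ)) := by
    intro K _
    rw [mul_pow, add_pow, Finset.mul_sum, Finset.mul_sum, Finset.sum_div]
  rw [Finset.sum_congr rfl hexp, Finset.sum_sigma']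
  -- expand RHS
  have hrhs : ∀ j ∈ Finset.range (n+1),
      (-(ρ:ℂ)^2 * z^2)^j / (j.factorial : ℂ) *
        ∑ k ∈ Finset.range (n - j + 1),
          (-(ρ:ℂ)^2)^k / (k.factorial : ℂ) *
            ((∏ i ∈ Finset.Icc (k+1) (n-j), (((2*(j:ℤ) - (n:ℤ) : ℤ) : ℂ) + (i:ℕ))) / (((n-j) - k).factorial : ℂ))
      = ∑ k ∈ Finset.range (n - j + 1),
          (-(ρ:ℂ)^2 * z^2)^j / (j.factorial : ℂ) *
            ((-(ρ:ℂ)^2)^k / (k.factorial : ℂ) *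
              ((∏ i ∈ Finset.Icc (k+1) (n-j), (((2*(j:ℤ) - (n:ℤ) : ℤ) : ℂ) + (i:ℕ))) / (((n-j) - k).factorial : ℂ))) := by
    intro j _
    rw [Finset.mul_sum]
  rw [Finset.sum_congr rfl hrhs, Finset.sum_sigma']
  set S := (Finset.range (n/2+1)).sigma (fun K => Finset.range (n - 2*K + 1)) with hS
  set T := (Finset.range (n+1)).sigma (fun j => Finset.range (n - j + 1)) with hT
  -- drop the zero terms on the RHS
  have hfilter :
      ∑ τ ∈ T.filter (fun τ => n ≤ 2*τ.1 + τ.2),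
        (-(ρ:ℂ)^2 * z^2)^τ.1 / (τ.1.factorial : ℂ) *
          ((-(ρ:ℂ)^2)^τ.2 / (τ.2.factorial : ℂ) *
            ((∏ i ∈ Finset.Icc (τ.2+1) (n-τ.1), (((2*(τ.1:ℤ) - (n:ℤ) : ℤ) : ℂ) + (i:ℕ))) / (((n-τ.1) - τ.2).factorial : ℂ)))
      = ∑ τ ∈ T,
        (-(ρ:ℂ)^2 * z^2)^τ.1 / (τ.1.factorial : ℂ) *
          ((-(ρ:ℂ)^2)^τ.2 / (τ.2.factorial : ℂ) *
            ((∏ i ∈ Finset.Icc (τ.2+1) (n-τ.1), (((2*(τ.1:ℤ) - (n:ℤ) : ℤ) : ℂ) + (i:ℕ))) / (((n-τ.1) - τ.2).factorial : ℂ))) := by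
    apply Finset.sum_filter_of_ne
    intro τ hτ hne
    by_contra hP
    apply hne
    simp only [hT, Finset.mem_sigma, Finset.mem_range] at hτ
    rw [prod_zero n τ.1 τ.2 (by omega) (by omega)]
    simp
  have hkey :
      ∑ σ ∈ S, (-(ρ:ℂ) * z) ^ n *
        ((-1:ℂ)^σ.1 * ((ρ:ℂ)^(n-2*σ.1) * (z^σ.2 * (z⁻¹)^((n-2*σ.1)-σ.2) * (((n-2*σ.1).choose σ.2 : ℕ) : ℂ)))
          / ((σ.1.factorial : ℂ) * ((n-2*σ.1).factorial : ℂ)))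
      = ∑ τ ∈ T.filter (fun τ => n ≤ 2*τ.1 + τ.2),
        (-(ρ:ℂ)^2 * z^2)^τ.1 / (τ.1.factorial : ℂ) *
          ((-(ρ:ℂ)^2)^τ.2 / (τ.2.factorial : ℂ) *
            ((∏ i ∈ Finset.Icc (τ.2+1) (n-τ.1), (((2*(τ.1:ℤ) - (n:ℤ) : ℤ) : ℂ) + (i:ℕ))) / (((n-τ.1) - τ.2).factorial : ℂ))) := by
    apply Finset.sum_nbij' (i := fun σ => (⟨σ.2 + σ.1, n - 2*σ.1 - σ.2⟩ : (_ : ℕ) × ℕ))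
      (j := fun τ => (⟨n - τ.1 - τ.2, 2*τ.1 + τ.2 - n⟩ : (_ : ℕ) × ℕ))
    · intro σ hσ
      simp only [hS, hT, Finset.mem_sigma, Finset.mem_range, Finset.mem_filter] at *
      omega
    · intro τ hτ
      simp only [hS, hT, Finset.mem_sigma, Finset.mem_range, Finset.mem_filter] at *
      omega
    · intro σ hσ
      simp only [hS, Finset.mem_sigma, Finset.mem_range] at hσ
      ext <;> simp <;> omega
    · intro τ hτ
      simp only [hT, Finset.mem_sigma, Finset.mem_range, Finset.mem_filter] at hτ
      ext <;> simp <;> omega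
    · intro σ hσ
      simp only [hS, Finset.mem_sigma, Finset.mem_range] at hσ
      obtain ⟨K, m⟩ := σ
      simp only at hσ ⊢
      obtain ⟨hK, hm⟩ := hσ
      set c := n - 2*K - m with hc
      -- rewrite the product
      have hprod := prod_eval n (m+K) c (by omega) (by omega) (by omega)
      rw [show 2*(m+K)+c-n = m by omega] at hprod
      rw [hprod]
      rw [show n - 2*K = m + c by omega, show n - (m+K) - c = K by omega,
        show n = m + c + 2*K by omega]
      exact term_eq ρ hρ0 z hz K m c
  rw [← hfilter, ← hkey, ← Finset.mul_sum]
  field_simp
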